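/- arXiv:2008.06829 — 2 statements merged into one kernel-verified Lean document; each statement's English description precedes it below -/
import Mathlib

section
/- For every real z > 0, the function B_t(z) = z·K₁(z)² / (2K₀(z)K₁(z) + z·(K₀(z)² − K₁(z)²)) satisfies B_t(z)/z > K₀(z)/K₁(z). -/
open Real

/-- Modified Bessel function of the second kind of order `j`:
`K_j(z) = ∫₀^∞ exp (−z cosh t) * cosh (j t) dt`. -/
noncomputable def besselK (j : ℕ) (z : ℝ) : ℝ :=
  ∫ t in Set.Ioi (0 : ℝ), Real.exp (-z * Real.cosh t) * Real.cosh ((j : ℝ) * t)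

open MeasureTheory Set Filter Topology

-- Cauchy-Schwarz for integrals, via the discriminant trick.
lemma integral_cs {α : Type*} [MeasurableSpace α] (μ : Measure α) (f g : α → ℝ)
    (hf : Integrable (fun x => f x ^ 2) μ) (hg : Integrable (fun x => g x ^ 2) μ)
    (hfg : Integrable (fun x => f x * g x) μ) :
    (∫ x, f x * g x ∂μ) ^ 2 ≤ (∫ x, f x ^ 2 ∂μ) * ∫ x, g x ^ 2 ∂μ := by
  have key : ∀ l : ℝ, 0 ≤ (∫ x, f x ^ 2 ∂μ) * (l * l) + (2 * ∫ x, f x * g x ∂μ) * l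
      + ∫ x, g x ^ 2 ∂μ := by
    intro l
    have hint : Integrable (fun x => (l * f x + g x) ^ 2) μ := by
      have : (fun x => (l * f x + g x) ^ 2)
          = fun x => (l * l) * f x ^ 2 + (2 * l) * (f x * g x) + g x ^ 2 := by
        funext x; ring
      rw [this]
      exact ((hf.const_mul _).add (hfg.const_mul _)).add hg
    have h0 : 0 ≤ ∫ x, (l * f x + g x) ^ 2 ∂μ :=
      integral_nonneg fun x => sq_nonneg _
    have hexp : ∫ x, (l * f x + g x) ^ 2 ∂μ
        = (∫ x, f x ^ 2 ∂μ) * (l * l) + (2 * ∫ x, f x * g x ∂μ) * l + ∫ x, g x ^ 2 ∂μ := by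
      have : (fun x => (l * f x + g x) ^ 2)
          = fun x => (l * l) * f x ^ 2 + (2 * l) * (f x * g x) + g x ^ 2 := by
        funext x; ring
      have ih1 : Integrable (fun x => l * l * f x ^ 2 + 2 * l * (f x * g x)) μ := by
        exact (hf.const_mul (l*l)).add (hfg.const_mul (2*l))
      rw [this]
      rw [integral_add ih1 hg, integral_add (hf.const_mul (l*l)) (hfg.const_mul (2*l)),
        MeasureTheory.integral_const_mul, MeasureTheory.integral_const_mul]
      ring
    linarith [hexp ▸ h0]
  have := discrim_le_zero key
  rw [discrim] at this
  nlinarith [this]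


lemma besselK_zero_eq (z : ℝ) :
    besselK 0 z = ∫ t in Ioi (0 : ℝ), exp (-z * cosh t) := by
  unfold besselK; norm_num

lemma besselK_one_eq (z : ℝ) :
    besselK 1 z = ∫ t in Ioi (0 : ℝ), exp (-z * cosh t) * cosh t := by
  unfold besselK; norm_num

lemma sinh_le_cosh (x : ℝ) : sinh x ≤ cosh x := by
  nlinarith [Real.cosh_sub_sinh x, Real.exp_pos (-x)]

lemma tendsto_sinh_atTop : Tendsto sinh atTop atTop := by
  refine tendsto_atTop_mono' atTop ?_ tendsto_id
  filter_upwards [eventually_ge_atTop (0:ℝ)] with x hx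
  exact Real.self_le_sinh_iff.2 hx

lemma tendsto_cosh_atTop : Tendsto cosh atTop atTop := by
  refine tendsto_atTop_mono' atTop ?_ tendsto_sinh_atTop
  filter_upwards with x using sinh_le_cosh x

lemma tendsto_exp_neg_mul_cosh (z : ℝ) (hz : 0 < z) :
    Tendsto (fun t : ℝ => exp (-z * cosh t)) atTop (𝓝 0) := by
  apply Real.tendsto_exp_atBot.comp
  exact (tendsto_cosh_atTop.const_mul_atTop_of_neg (by linarith)).comp tendsto_id

lemma int_maj (z : ℝ) (hz : 0 < z) :
    IntegrableOn (fun t => exp (-z * sinh t) * cosh t) (Ioi (0:ℝ)) := by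
  have hd : ∀ x ∈ Ici (0:ℝ), HasDerivAt (fun t => -(1/z) * exp (-z * sinh t))
      (exp (-z * sinh x) * cosh x) x := by
    intro x _
    have h1 : HasDerivAt (fun t : ℝ => -z * sinh t) (-z * cosh x) x :=
      (Real.hasDerivAt_sinh x).const_mul (-z)
    have h2 := (h1.exp).const_mul (-(1/z))
    refine h2.congr_deriv (Eq.symm ?_)
    field_simp
  have hlim : Tendsto (fun t : ℝ => -(1/z) * exp (-z * sinh t)) atTop (𝓝 (-(1/z) * 0)) := by
    refine Tendsto.const_mul _ ?_
    apply Real.tendsto_exp_atBot.comp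
    exact tendsto_sinh_atTop.const_mul_atTop_of_neg (by linarith)
  exact integrableOn_Ioi_deriv_of_nonneg' hd (fun x _ => by positivity) hlim

lemma cont_ec (z : ℝ) : Continuous (fun t : ℝ => exp (-z * cosh t)) :=
  Real.continuous_exp.comp (continuous_const.mul Real.continuous_cosh)

lemma int_L2 (z : ℝ) (hz : 0 < z) :
    IntegrableOn (fun t => exp (-z * cosh t) * cosh t) (Ioi (0:ℝ)) := by
  refine Integrable.mono (int_maj z hz) ?_ ?_
  · exact ((cont_ec z).mul Real.continuous_cosh).aestronglyMeasurable.restrict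
  · filter_upwards with t
    have h1 : (0:ℝ) < cosh t := Real.cosh_pos t
    rw [Real.norm_eq_abs, Real.norm_eq_abs, abs_of_nonneg (by positivity),
      abs_of_nonneg (by positivity)]
    have : exp (-z * cosh t) ≤ exp (-z * sinh t) := by
      apply Real.exp_le_exp.2
      nlinarith [sinh_le_cosh t]
    nlinarith

lemma int_L3 (z : ℝ) (hz : 0 < z) :
    IntegrableOn (fun t => exp (-z * cosh t)) (Ioi (0:ℝ)) := by
  refine Integrable.mono (int_L2 z hz) ((cont_ec z).aestronglyMeasurable.restrict) ?_
  filter_upwards with t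
  have h1 : (1:ℝ) ≤ cosh t := Real.one_le_cosh t
  rw [Real.norm_eq_abs, Real.norm_eq_abs, abs_of_nonneg (by positivity),
    abs_of_nonneg (by positivity)]
  nlinarith [Real.exp_pos (-z * cosh t)]

lemma int_L4 (z : ℝ) (hz : 0 < z) :
    IntegrableOn (fun t => exp (-z * cosh t) * (2 / (1 + cosh t))) (Ioi (0:ℝ)) := by
  have hcont : Continuous (fun t : ℝ => exp (-z * cosh t) * (2 / (1 + cosh t))) := by
    refine (cont_ec z).mul (continuous_const.div (continuous_const.add Real.continuous_cosh) ?_)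
    intro x; positivity
  refine Integrable.mono (int_L3 z hz) hcont.aestronglyMeasurable.restrict ?_
  filter_upwards with t
  have h1 : (1:ℝ) ≤ cosh t := Real.one_le_cosh t
  have h2 : (0:ℝ) < 1 + cosh t := by linarith
  rw [Real.norm_eq_abs, Real.norm_eq_abs, abs_of_nonneg (by positivity),
    abs_of_nonneg (by positivity)]
  have h3 : 2 / (1 + cosh t) ≤ 1 := by
    rw [div_le_one h2]; linarith
  nlinarith [Real.exp_pos (-z * cosh t)]

lemma int_L5 (z : ℝ) (hz : 0 < z) :
    IntegrableOn (fun t => exp (-z * cosh t) * ((1 + cosh t) / 2)) (Ioi (0:ℝ)) := by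
  have hcont : Continuous (fun t : ℝ => exp (-z * cosh t) * ((1 + cosh t) / 2)) :=
    (cont_ec z).mul ((continuous_const.add Real.continuous_cosh).div_const 2)
  refine Integrable.mono (int_L2 z hz) hcont.aestronglyMeasurable.restrict ?_
  filter_upwards with t
  have h1 : (1:ℝ) ≤ cosh t := Real.one_le_cosh t
  rw [Real.norm_eq_abs, Real.norm_eq_abs, abs_of_nonneg (by positivity),
    abs_of_nonneg (by positivity)]
  nlinarith [Real.exp_pos (-z * cosh t)]

lemma key_id (z : ℝ) (hz : 0 < z) :
    ∫ t in Ioi (0:ℝ), exp (-z * cosh t) * (2 / (1 + cosh t))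
      = 2 * z * ((∫ t in Ioi (0:ℝ), exp (-z * cosh t) * cosh t)
          - ∫ t in Ioi (0:ℝ), exp (-z * cosh t)) := by
  set F' : ℝ → ℝ := fun t => exp (-z * cosh t) * (2 / (1 + cosh t))
      - 2 * z * (exp (-z * cosh t) * cosh t - exp (-z * cosh t)) with hF'
  have hF'int : IntegrableOn F' (Ioi (0:ℝ)) := by
    exact (int_L4 z hz).sub (((int_L2 z hz).sub (int_L3 z hz)).const_mul (2 * z))
  have hderiv : ∀ x ∈ Ici (0:ℝ),
      HasDerivAt (fun t => exp (-z * cosh t) * (2 * sinh t / (1 + cosh t))) (F' x) x := by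
    intro x _
    have hne : (1:ℝ) + cosh x ≠ 0 := by positivity
    have hs := Real.sinh_sq x
    have hP : HasDerivAt (fun t : ℝ => exp (-z * cosh t)) (exp (-z * cosh x) * (-z * sinh x)) x :=
      ((Real.hasDerivAt_cosh x).const_mul (-z)).exp
    have hnum : HasDerivAt (fun t : ℝ => 2 * sinh t) (2 * cosh x) x :=
      (Real.hasDerivAt_sinh x).const_mul 2
    have hden : HasDerivAt (fun t : ℝ => 1 + cosh t) (sinh x) x :=
      (Real.hasDerivAt_cosh x).const_add 1
    have hQ : HasDerivAt (fun t : ℝ => 2 * sinh t / (1 + cosh t)) (2 / (1 + cosh x)) x := by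
      have h := hnum.div hden hne
      refine h.congr_deriv (Eq.symm ?_)
      rw [div_eq_div_iff hne (by positivity)]
      linear_combination (2 * (1 + Real.cosh x)) * hs
    have h := hP.mul hQ
    refine h.congr_deriv (Eq.symm ?_)
    rw [hF']
    have hkey : 2 * sinh x / (1 + cosh x) * sinh x = 2 * (cosh x - 1) := by
      rw [div_mul_eq_mul_div, div_eq_iff hne]
      linear_combination (2:ℝ) * hs
    linear_combination (z * Real.exp (-z * Real.cosh x)) * hkey
  have hlim : Tendsto (fun t : ℝ => exp (-z * cosh t) * (2 * sinh t / (1 + cosh t)))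
      atTop (𝓝 0) := by
    have hbound : ∀ᶠ t in atTop, ‖exp (-z * cosh t) * (2 * sinh t / (1 + cosh t))‖
        ≤ 2 * exp (-z * cosh t) := by
      filter_upwards [eventually_ge_atTop (0:ℝ)] with t ht
      have h1 : (0:ℝ) ≤ sinh t := Real.sinh_nonneg_iff.2 ht
      have h2 : (0:ℝ) < 1 + cosh t := by nlinarith [Real.cosh_pos t]
      have h3 : 2 * sinh t / (1 + cosh t) ≤ 2 := by
        rw [div_le_iff₀ h2]
        nlinarith [sinh_le_cosh t]
      rw [Real.norm_eq_abs, abs_of_nonneg (by positivity)]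
      nlinarith [Real.exp_pos (-z * cosh t)]
    have h0 : Tendsto (fun t : ℝ => 2 * exp (-z * cosh t)) atTop (𝓝 (2 * 0)) :=
      (tendsto_exp_neg_mul_cosh z hz).const_mul 2
    rw [mul_zero] at h0
    exact squeeze_zero_norm' hbound h0
  have hint := integral_Ioi_of_hasDerivAt_of_tendsto' hderiv hF'int hlim
  simp only [Real.cosh_zero, Real.sinh_zero] at hint
  norm_num at hint
  have hsplit : ∫ x in Ioi (0:ℝ), F' x
      = (∫ t in Ioi (0:ℝ), exp (-z * cosh t) * (2 / (1 + cosh t)))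
        - 2 * z * ((∫ t in Ioi (0:ℝ), exp (-z * cosh t) * cosh t)
          - ∫ t in Ioi (0:ℝ), exp (-z * cosh t)) := by
    have i1 : Integrable (fun t => exp (-z * cosh t) * cosh t - exp (-z * cosh t))
        (volume.restrict (Ioi 0)) := by
      exact (int_L2 z hz).sub (int_L3 z hz)
    have i2 : Integrable (fun t => 2 * z * (exp (-z * cosh t) * cosh t - exp (-z * cosh t)))
        (volume.restrict (Ioi 0)) := i1.const_mul _
    rw [hF']
    rw [integral_sub (int_L4 z hz) i2, MeasureTheory.integral_const_mul,
      integral_sub (int_L2 z hz) (int_L3 z hz)]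
  rw [hint] at hsplit
  linarith

lemma posA (z : ℝ) (hz : 0 < z) : 0 < ∫ t in Ioi (0:ℝ), exp (-z * cosh t) := by
  rw [setIntegral_pos_iff_support_of_nonneg_ae
    (Filter.Eventually.of_forall fun t => (Real.exp_pos _).le) (int_L3 z hz)]
  have hsupp : Function.support (fun t : ℝ => exp (-z * cosh t)) ∩ Ioi 0 = Ioi 0 := by
    ext t; simp [Function.mem_support, Real.exp_ne_zero]
  rw [hsupp, Real.volume_Ioi]
  exact ENNReal.zero_lt_top

lemma posBA (z : ℝ) (hz : 0 < z) :
    (∫ t in Ioi (0:ℝ), exp (-z * cosh t)) < ∫ t in Ioi (0:ℝ), exp (-z * cosh t) * cosh t := by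
  have hint : IntegrableOn (fun t => exp (-z * cosh t) * (cosh t - 1)) (Ioi (0:ℝ)) := by
    have : (fun t => exp (-z * cosh t) * (cosh t - 1))
        = fun t => exp (-z * cosh t) * cosh t - exp (-z * cosh t) := by
      funext t; ring
    rw [this]
    exact (int_L2 z hz).sub (int_L3 z hz)
  have hpos : 0 < ∫ t in Ioi (0:ℝ), exp (-z * cosh t) * (cosh t - 1) := by
    rw [setIntegral_pos_iff_support_of_nonneg_ae
      (Filter.Eventually.of_forall fun t =>
        mul_nonneg (Real.exp_pos _).le (by nlinarith [Real.one_le_cosh t])) hint]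
    have hsupp : Function.support (fun t : ℝ => exp (-z * cosh t) * (cosh t - 1)) ∩ Ioi 0
        = Ioi 0 := by
      ext t
      simp only [Function.mem_support, mem_inter_iff, mem_Ioi, ne_eq, mul_eq_zero, not_or]
      constructor
      · rintro ⟨-, h⟩; exact h
      · intro ht
        refine ⟨⟨Real.exp_ne_zero _, ?_⟩, ht⟩
        have : (1:ℝ) < cosh t := Real.one_lt_cosh.2 (by linarith)
        intro hc; linarith [sub_eq_zero.1 hc]
    rw [hsupp, Real.volume_Ioi]
    exact ENNReal.zero_lt_top
  have heq : ∫ t in Ioi (0:ℝ), exp (-z * cosh t) * (cosh t - 1)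
      = (∫ t in Ioi (0:ℝ), exp (-z * cosh t) * cosh t) - ∫ t in Ioi (0:ℝ), exp (-z * cosh t) := by
    have : (fun t => exp (-z * cosh t) * (cosh t - 1))
        = fun t => exp (-z * cosh t) * cosh t - exp (-z * cosh t) := by
      funext t; ring
    rw [this, integral_sub (int_L2 z hz) (int_L3 z hz)]
  linarith [heq ▸ hpos]

lemma hUB (z : ℝ) (hz : 0 < z) :
    (∫ t in Ioi (0:ℝ), exp (-z * cosh t) * (2 / (1 + cosh t)))
      ≤ ∫ t in Ioi (0:ℝ), exp (-z * cosh t) := by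
  refine setIntegral_mono_on (int_L4 z hz) (int_L3 z hz) measurableSet_Ioi fun t _ => ?_
  have h1 : (1:ℝ) ≤ cosh t := Real.one_le_cosh t
  have h2 : (0:ℝ) < 1 + cosh t := by linarith
  have h3 : 2 / (1 + cosh t) ≤ 1 := by rw [div_le_one h2]; linarith
  nlinarith [Real.exp_pos (-z * cosh t)]

lemma gsq_eq (z : ℝ) (hz : 0 < z) :
    ∫ t in Ioi (0:ℝ), exp (-z * cosh t) * ((1 + cosh t) / 2)
      = ((∫ t in Ioi (0:ℝ), exp (-z * cosh t))
          + ∫ t in Ioi (0:ℝ), exp (-z * cosh t) * cosh t) / 2 := by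
  have : (fun t => exp (-z * cosh t) * ((1 + cosh t) / 2))
      = fun t => (exp (-z * cosh t) + exp (-z * cosh t) * cosh t) / 2 := by
    funext t; ring
  rw [this]
  rw [integral_div, integral_add (int_L3 z hz) (int_L2 z hz)]

lemma hCS (z : ℝ) (hz : 0 < z) :
    (∫ t in Ioi (0:ℝ), exp (-z * cosh t)) ^ 2
      ≤ (∫ t in Ioi (0:ℝ), exp (-z * cosh t) * (2 / (1 + cosh t)))
        * ∫ t in Ioi (0:ℝ), exp (-z * cosh t) * ((1 + cosh t) / 2) := by
  set f : ℝ → ℝ := fun t => Real.sqrt (exp (-z * cosh t) * (2 / (1 + cosh t))) with hf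
  set g : ℝ → ℝ := fun t => Real.sqrt (exp (-z * cosh t) * ((1 + cosh t) / 2)) with hg
  have hfg : ∀ t, f t * g t = exp (-z * cosh t) := by
    intro t
    have h2 : (0:ℝ) < 1 + cosh t := by nlinarith [Real.one_le_cosh t]
    rw [hf, hg]
    rw [← Real.sqrt_mul (by positivity)]
    have : exp (-z * cosh t) * (2 / (1 + cosh t)) * (exp (-z * cosh t) * ((1 + cosh t) / 2))
        = exp (-z * cosh t) ^ 2 := by
      field_simp
    rw [this, Real.sqrt_sq (Real.exp_nonneg _)]
  have hf2 : ∀ t, f t ^ 2 = exp (-z * cosh t) * (2 / (1 + cosh t)) := by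
    intro t
    have h2 : (0:ℝ) < 1 + cosh t := by nlinarith [Real.one_le_cosh t]
    rw [hf, Real.sq_sqrt (by positivity)]
  have hg2 : ∀ t, g t ^ 2 = exp (-z * cosh t) * ((1 + cosh t) / 2) := by
    intro t
    have h2 : (0:ℝ) < 1 + cosh t := by nlinarith [Real.one_le_cosh t]
    rw [hg, Real.sq_sqrt (by positivity)]
  have if2 : Integrable (fun t => f t ^ 2) (volume.restrict (Ioi 0)) := by
    have : (fun t => f t ^ 2) = fun t => exp (-z * cosh t) * (2 / (1 + cosh t)) := by
      funext t; exact hf2 t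
    rw [this]; exact int_L4 z hz
  have ig2 : Integrable (fun t => g t ^ 2) (volume.restrict (Ioi 0)) := by
    have : (fun t => g t ^ 2) = fun t => exp (-z * cosh t) * ((1 + cosh t) / 2) := by
      funext t; exact hg2 t
    rw [this]; exact int_L5 z hz
  have ifg : Integrable (fun t => f t * g t) (volume.restrict (Ioi 0)) := by
    have : (fun t => f t * g t) = fun t => exp (-z * cosh t) := by
      funext t; exact hfg t
    rw [this]; exact int_L3 z hz
  have := integral_cs (volume.restrict (Ioi 0)) f g if2 ig2 ifg
  calc (∫ t in Ioi (0:ℝ), exp (-z * cosh t)) ^ 2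
      = (∫ t in Ioi (0:ℝ), f t * g t) ^ 2 := by
        congr 1; refine integral_congr_ae (Filter.Eventually.of_forall fun t => (hfg t).symm)
    _ ≤ (∫ t in Ioi (0:ℝ), f t ^ 2) * ∫ t in Ioi (0:ℝ), g t ^ 2 := this
    _ = (∫ t in Ioi (0:ℝ), exp (-z * cosh t) * (2 / (1 + cosh t)))
        * ∫ t in Ioi (0:ℝ), exp (-z * cosh t) * ((1 + cosh t) / 2) := by
        congr 1
        · exact integral_congr_ae (Filter.Eventually.of_forall fun t => hf2 t)
        · exact integral_congr_ae (Filter.Eventually.of_forall fun t => hg2 t)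

theorem Bt_ratio_lower_bound (z : ℝ) (hz : 0 < z) :
    (z * (besselK 1 z) ^ 2 /
        (2 * besselK 0 z * besselK 1 z + z * ((besselK 0 z) ^ 2 - (besselK 1 z) ^ 2))) / z >
      besselK 0 z / besselK 1 z := by
  rw [besselK_zero_eq z, besselK_one_eq z]
  set IA := ∫ t in Ioi (0:ℝ), exp (-z * cosh t) with hIA
  set IB := ∫ t in Ioi (0:ℝ), exp (-z * cosh t) * cosh t with hIB
  have ha : 0 < IA := posA z hz
  have hab : IA < IB := posBA z hz
  have hb : 0 < IB := lt_trans ha hab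
  have hcs : IA ^ 2 ≤ z * (IB ^ 2 - IA ^ 2) := by
    have h1 := hCS z hz
    have h2 : (∫ t in Ioi (0:ℝ), exp (-z * cosh t) * (2 / (1 + cosh t)))
        * ∫ t in Ioi (0:ℝ), exp (-z * cosh t) * ((1 + cosh t) / 2)
        = z * (IB ^ 2 - IA ^ 2) := by
      rw [key_id z hz, gsq_eq z hz, ← hIA, ← hIB]; ring
    rw [h2] at h1
    exact h1
  have hub2 : 2 * z * (IB - IA) ≤ IA := by
    have := hUB z hz
    rw [key_id z hz] at this
    exact this
  set D := 2 * IA * IB + z * (IA ^ 2 - IB ^ 2) with hD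
  have hDpos : 0 < D := by
    have hprod : 2 * z * (IB - IA) * (IA + IB) ≤ IA * (IA + IB) :=
      mul_le_mul_of_nonneg_right hub2 (by linarith)
    nlinarith [mul_pos ha hb, mul_lt_mul_of_pos_left hab ha]
  have hsimp : z * IB ^ 2 / D / z = IB ^ 2 / D := by
    field_simp
  rw [gt_iff_lt, hsimp, div_lt_div_iff₀ hb hDpos]
  have hq : 0 < IB ^ 2 + IA * IB - IA ^ 2 := by nlinarith
  nlinarith [mul_pos (sub_pos.2 hab) hq, mul_le_mul_of_nonneg_left hcs ha.le]
end

section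
/- For every real δ > 1, every real ε > 0, and every positive integer k, the Laplace slender-body PDE eigenvalue λ = 2π²εk·K₁(πεk)/K₀(πεk) and the δ-regularized Laplace slender-body approximation eigenvalue λ^δ = 2π/(log δ + K₀(δπεk)) satisfy |λ − λ^δ| ≤ 2π·(1/2 + 1/log δ + πεk). -/
open Real MeasureTheory Set

private lemma self_le_cosh {t : ℝ} (ht : 0 ≤ t) : t ≤ Real.cosh t :=
  le_trans (Real.self_le_sinh_iff.2 ht) (Real.sinh_lt_cosh t).le

private lemma intK0 {z : ℝ} (hz : 0 < z) :
    IntegrableOn (fun t => Real.exp (-z * Real.cosh t)) (Ioi (0 : ℝ)) := by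
  apply Integrable.mono' (exp_neg_integrableOn_Ioi 0 hz)
  · exact (Continuous.aestronglyMeasurable (by continuity))
  · filter_upwards [ae_restrict_mem measurableSet_Ioi] with t ht
    rw [Real.norm_eq_abs, abs_of_nonneg (Real.exp_pos _).le]
    apply Real.exp_le_exp.2
    have := self_le_cosh (le_of_lt ht)
    nlinarith
private lemma intK1 {z : ℝ} (hz : 0 < z) :
    IntegrableOn (fun t => Real.exp (-z * Real.cosh t) * Real.cosh t) (Ioi (0 : ℝ)) := by
  have h2 : (0:ℝ) < z / 2 := by linarith
  apply Integrable.mono' (((exp_neg_integrableOn_Ioi 0 h2)).const_mul (2 / z))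
  · exact (Continuous.aestronglyMeasurable (by continuity))
  · filter_upwards [ae_restrict_mem measurableSet_Ioi] with t ht
    have hc := Real.cosh_pos t
    have hct := self_le_cosh (le_of_lt ht)
    rw [Real.norm_eq_abs, abs_of_nonneg (by positivity)]
    have key : Real.cosh t * Real.exp (-(z/2) * Real.cosh t) ≤ 2 / z := by
      have h1 : (z/2) * Real.cosh t ≤ Real.exp ((z/2) * Real.cosh t) := by
        have := Real.add_one_le_exp ((z/2) * Real.cosh t); linarith
      rw [neg_mul, Real.exp_neg, inv_eq_one_div, mul_one_div,
        div_le_div_iff₀ (Real.exp_pos _) hz]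
      nlinarith
    have : Real.exp (-z * Real.cosh t) * Real.cosh t
        = (Real.cosh t * Real.exp (-(z/2) * Real.cosh t)) * Real.exp (-(z/2) * Real.cosh t) := by
      rw [mul_assoc, ← Real.exp_add]; ring_nf
    rw [this]
    calc (Real.cosh t * Real.exp (-(z/2) * Real.cosh t)) * Real.exp (-(z/2) * Real.cosh t)
        ≤ (2 / z) * Real.exp (-(z/2) * Real.cosh t) := by
          apply mul_le_mul_of_nonneg_right key (Real.exp_pos _).le
      _ ≤ (2 / z) * Real.exp (-(z/2) * t) := by
          apply mul_le_mul_of_nonneg_left _ (by positivity)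
          apply Real.exp_le_exp.2; nlinarith

private lemma besselK0_pos {z : ℝ} (hz : 0 < z) : 0 < besselK 0 z := by
  unfold besselK
  simp only [Nat.cast_zero, zero_mul, Real.cosh_zero, mul_one]
  have hint : IntegrableOn (fun t => Real.exp (-z * Real.cosh t)) (Ioi (0 : ℝ)) := intK0 hz
  have h1 : (0:ℝ) < ∫ t in Ioo (0:ℝ) 1, Real.exp (-z * Real.cosh 1) := by
    simp [Real.volume_Ioo]
    positivity
  calc (0:ℝ) < ∫ t in Ioo (0:ℝ) 1, Real.exp (-z * Real.cosh 1) := h1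
    _ ≤ ∫ t in Ioo (0:ℝ) 1, Real.exp (-z * Real.cosh t) := by
        apply setIntegral_mono_on (by simp) (hint.mono_set Ioo_subset_Ioi_self)
          measurableSet_Ioo
        intro t ht
        apply Real.exp_le_exp.2
        have : Real.cosh t ≤ Real.cosh 1 := by
          rw [Real.cosh_le_cosh]
          rw [abs_of_nonneg ht.1.le]
          simpa using ht.2.le
        nlinarith
    _ ≤ ∫ t in Ioi (0:ℝ), Real.exp (-z * Real.cosh t) := by
        apply setIntegral_mono_set hint
        · filter_upwards with t using (Real.exp_pos _).le
        · exact HasSubset.Subset.eventuallyLE Ioo_subset_Ioi_self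

private lemma besselK1_nonneg {z : ℝ} (hz : 0 < z) : 0 ≤ besselK 1 z := by
  unfold besselK
  apply setIntegral_nonneg measurableSet_Ioi
  intro t _
  exact mul_nonneg (Real.exp_pos _).le (Real.cosh_pos _).le

private lemma self_le_cosh' (t : ℝ) : t ≤ Real.cosh t := by
  rcases le_or_gt t 0 with h | h
  · exact h.trans (by linarith [Real.cosh_pos t, Real.one_le_cosh t])
  · exact self_le_cosh h.le

private lemma deriv_algebra (E S C z : ℝ) (hC : 0 < C) (h1 : C^2 - S^2 = 1) :
    E * (z * (C^2 + S^2 - 1) - 1/(2*C^2)) =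
      -(E*(-z*(2*S*C))*(S/C) + E*((C*(1/2)*C - S*(S*(1/2)))/C^2)) := by
  field_simp
  ring_nf
  linear_combination (E + 2 * E * z * C^2) * h1

private lemma besselK1_key {z : ℝ} (hz : 0 < z) :
    z * besselK 1 z ≤ (z + 1/2) * besselK 0 z := by
  set E : ℝ → ℝ := fun t => Real.exp (-z * Real.cosh t) with hE_def
  have hI0 : IntegrableOn E (Ioi (0:ℝ)) := intK0 hz
  have hI1 : IntegrableOn (fun t => E t * Real.cosh t) (Ioi (0:ℝ)) := intK1 hz
  have hIw : IntegrableOn (fun t => E t * (1 / (2 * Real.cosh (t/2) ^ 2))) (Ioi (0:ℝ)) := by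
    apply Integrable.mono' hI0
    · apply Continuous.aestronglyMeasurable
      apply Continuous.mul (by continuity)
      apply Continuous.div continuous_const (by continuity)
      intro x; positivity
    · filter_upwards with t
      have h1 : (1:ℝ) ≤ Real.cosh (t/2) := Real.one_le_cosh _
      have hw : (1:ℝ) / (2 * Real.cosh (t/2) ^ 2) ≤ 1 := by
        rw [div_le_one (by positivity)]; nlinarith
      rw [Real.norm_eq_abs, abs_of_nonneg (by positivity)]
      calc E t * (1 / (2 * Real.cosh (t/2) ^ 2)) ≤ E t * 1 :=
            mul_le_mul_of_nonneg_left hw (Real.exp_pos _).le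
        _ = E t := mul_one _
  set g' : ℝ → ℝ := fun t =>
    E t * (z * (Real.cosh t - 1) - 1 / (2 * Real.cosh (t/2) ^ 2)) with hg'_def
  have hg'_eq : g' = fun t =>
      z * (E t * Real.cosh t) - z * E t - E t * (1 / (2 * Real.cosh (t/2) ^ 2)) := by
    funext t; simp only [hg'_def]; ring
  have hIg' : IntegrableOn g' (Ioi (0:ℝ)) := by
    rw [hg'_eq]; exact ((hI1.const_mul z).sub (hI0.const_mul z)).sub hIw
  set F : ℝ → ℝ := fun t => -(E t * (Real.sinh (t/2) / Real.cosh (t/2))) with hF_def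
  have hderiv : ∀ t : ℝ, HasDerivAt F (g' t) t := by
    intro t
    have hC : (0:ℝ) < Real.cosh (t/2) := Real.cosh_pos _
    have hhalf : HasDerivAt (fun u : ℝ => u / 2) (1/2 : ℝ) t := by
      simpa using (hasDerivAt_id t).div_const 2
    have hs : HasDerivAt (fun u : ℝ => Real.sinh (u/2)) (Real.cosh (t/2) * (1/2)) t := by
      simpa [Function.comp_def] using (Real.hasDerivAt_sinh (t/2)).comp t hhalf
    have hc : HasDerivAt (fun u : ℝ => Real.cosh (u/2)) (Real.sinh (t/2) * (1/2)) t := by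
      simpa [Function.comp_def] using (Real.hasDerivAt_cosh (t/2)).comp t hhalf
    have hq := hs.div hc hC.ne'
    have hE : HasDerivAt E (E t * (-z * Real.sinh t)) t :=
      ((Real.hasDerivAt_cosh t).const_mul (-z)).exp
    have hF := (hE.mul hq).neg
    refine hF.congr_deriv (Eq.symm ?_)
    have hst : Real.sinh t = 2 * Real.sinh (t/2) * Real.cosh (t/2) := by
      rw [← Real.sinh_two_mul]; congr 1; ring
    have hct : Real.cosh t = Real.cosh (t/2) ^ 2 + Real.sinh (t/2) ^ 2 := by
      rw [← Real.cosh_two_mul]; congr 1; ring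
    have h1 : Real.cosh (t/2) ^ 2 - Real.sinh (t/2) ^ 2 = 1 :=
      Real.cosh_sq_sub_sinh_sq _
    show E t * (z * (Real.cosh t - 1) - 1 / (2 * Real.cosh (t/2) ^ 2)) = _
    rw [hst, hct]
    exact deriv_algebra (E t) (Real.sinh (t/2)) (Real.cosh (t/2)) z hC h1
  have hcont : ContinuousWithinAt F (Ici (0:ℝ)) 0 :=
    ((hderiv 0).continuousAt).continuousWithinAt
  have htend : Filter.Tendsto F Filter.atTop (nhds 0) := by
    have hexp : Filter.Tendsto (fun t : ℝ => Real.exp (-z * t)) Filter.atTop (nhds 0) := by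
      have h : Filter.Tendsto (fun t : ℝ => -(z * t)) Filter.atTop Filter.atBot :=
        Filter.tendsto_neg_atTop_atBot.comp
          (Filter.Tendsto.const_mul_atTop hz Filter.tendsto_id)
      have h2 := Real.tendsto_exp_atBot.comp h
      simpa only [Function.comp_def, neg_mul] using h2
    apply squeeze_zero_norm _ hexp
    intro t
    have hC : (0:ℝ) < Real.cosh (t/2) := Real.cosh_pos _
    have habs : |Real.sinh (t/2) / Real.cosh (t/2)| ≤ 1 := by
      rw [abs_div, abs_of_pos hC, div_le_one hC, abs_le]
      constructor
      · nlinarith [Real.cosh_add_sinh (t/2), Real.exp_pos (t/2)]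
      · exact (Real.sinh_lt_cosh _).le
    calc ‖F t‖ = E t * |Real.sinh (t/2) / Real.cosh (t/2)| := by
          rw [hF_def]; simp only [norm_neg, Real.norm_eq_abs, abs_mul,
            abs_of_nonneg (show 0 ≤ E t from (Real.exp_pos _).le)]
      _ ≤ E t * 1 := mul_le_mul_of_nonneg_left habs (Real.exp_pos _).le
      _ ≤ Real.exp (-z * t) := by
          rw [mul_one, hE_def]
          apply Real.exp_le_exp.2
          nlinarith [self_le_cosh' t]
  have hibp : ∫ t in Ioi (0:ℝ), g' t = 0 - F 0 :=
    integral_Ioi_of_hasDerivAt_of_tendsto hcont (fun t _ => hderiv t) hIg' htend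
  have hF0 : F 0 = 0 := by simp [hF_def]
  rw [hF0, sub_zero] at hibp
  have hsplit : ∫ t in Ioi (0:ℝ), g' t =
      z * (∫ t in Ioi (0:ℝ), E t * Real.cosh t) - z * (∫ t in Ioi (0:ℝ), E t)
        - ∫ t in Ioi (0:ℝ), E t * (1 / (2 * Real.cosh (t/2) ^ 2)) := by
    have i1 : IntegrableOn (fun t => z * (E t * Real.cosh t)) (Ioi (0:ℝ)) :=
      hI1.const_mul z
    have i2 : IntegrableOn (fun t => z * E t) (Ioi (0:ℝ)) := hI0.const_mul z
    have i12 : IntegrableOn (fun t => z * (E t * Real.cosh t) - z * E t) (Ioi (0:ℝ)) :=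
      i1.sub i2
    rw [hg'_eq, integral_sub i12 hIw, integral_sub i1 i2,
      integral_const_mul, integral_const_mul]
  have hwle : (∫ t in Ioi (0:ℝ), E t * (1 / (2 * Real.cosh (t/2) ^ 2)))
      ≤ (1/2) * ∫ t in Ioi (0:ℝ), E t := by
    rw [← integral_const_mul]
    apply integral_mono hIw (hI0.const_mul (1/2))
    intro t
    have h1 : (1:ℝ) ≤ Real.cosh (t/2) := Real.one_le_cosh _
    have hw : (1:ℝ) / (2 * Real.cosh (t/2) ^ 2) ≤ 1/2 := by
      rw [div_le_div_iff₀ (by positivity) (by norm_num)]; nlinarith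
    calc E t * (1 / (2 * Real.cosh (t/2) ^ 2)) ≤ E t * (1/2) :=
          mul_le_mul_of_nonneg_left hw (Real.exp_pos _).le
      _ = 1/2 * E t := by ring
  have hb1 : besselK 1 z = ∫ t in Ioi (0:ℝ), E t * Real.cosh t := by
    unfold besselK; simp [hE_def]
  have hb0 : besselK 0 z = ∫ t in Ioi (0:ℝ), E t := by
    unfold besselK; simp [hE_def]
  rw [hb1, hb0]
  rw [hsplit] at hibp
  linarith

theorem delta_reg_laplace_eigenvalue_difference (δ : ℝ) (hδ : 1 < δ)
    (ε : ℝ) (hε : 0 < ε) (k : ℕ) (hk : 1 ≤ k) :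
    |2 * π ^ 2 * ε * (k : ℝ) *
          (besselK 1 (π * ε * (k : ℝ)) / besselK 0 (π * ε * (k : ℝ))) -
        2 * π / (Real.log δ + besselK 0 (δ * π * ε * (k : ℝ)))| ≤
      2 * π * (1 / 2 + 1 / Real.log δ + π * ε * (k : ℝ)) := by
  have hkpos : (0:ℝ) < (k : ℝ) := by exact_mod_cast hk
  set z : ℝ := π * ε * (k : ℝ) with hz_def
  have hzpos : 0 < z := by positivity
  have hz2 : 0 < δ * π * ε * (k : ℝ) := by positivity
  have hK0 : 0 < besselK 0 z := besselK0_pos hzpos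
  have hK0' : 0 < besselK 0 (δ * π * ε * (k : ℝ)) := besselK0_pos hz2
  have hK1 : 0 ≤ besselK 1 z := besselK1_nonneg hzpos
  have hlog : 0 < Real.log δ := Real.log_pos hδ
  have hkey := besselK1_key hzpos
  set a : ℝ := 2 * π ^ 2 * ε * (k : ℝ) * (besselK 1 z / besselK 0 z) with ha_def
  set b : ℝ := 2 * π / (Real.log δ + besselK 0 (δ * π * ε * (k : ℝ))) with hb_def
  have ha0 : 0 ≤ a := by
    rw [ha_def]; positivity
  have hb0 : 0 ≤ b := by
    rw [hb_def]; positivity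
  have hA : a ≤ 2 * π * z + π := by
    have h1 : a = 2 * π * ((z * besselK 1 z) / besselK 0 z) := by
      rw [ha_def, hz_def]; ring
    rw [h1]
    have h2 : (z * besselK 1 z) / besselK 0 z ≤ z + 1/2 := by
      rw [div_le_iff₀ hK0]
      calc z * besselK 1 z ≤ (z + 1/2) * besselK 0 z := hkey
        _ = (z + 1/2) * besselK 0 z := rfl
    nlinarith [pi_pos]
  have hB : b ≤ 2 * π / Real.log δ := by
    rw [hb_def]
    apply div_le_div_of_nonneg_left (by positivity) hlog
    linarith
  have hRHS : 2 * π * (1 / 2 + 1 / Real.log δ + z) =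
      (2 * π * z + π) + 2 * π / Real.log δ := by
    field_simp; ring
  rw [hRHS]
  have hBpos : 0 ≤ 2 * π / Real.log δ := by positivity
  have hApos : 0 ≤ 2 * π * z + π := le_trans ha0 hA
  rw [abs_sub_le_iff]
  constructor <;> linarith
end
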